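/- Let C be a symmetric positive-definite real 3×3 matrix and define S(C) = μ(1 − (det C)^(−β/2) C⁻¹) on the open set of matrices with positive determinant. Then S is Fréchet differentiable at C and, for every symmetric 3×3 matrix H, its derivative in direction H is DS(C)[H] = μ (det C)^(−β/2) ( C⁻¹ * H * C⁻¹ + (β/2) · trace(C⁻¹ * H) · C⁻¹ ); equivalently, in components, 2·(DS(C)[H])_{ij} = μ (det C)^(−β/2) Σ_{k,l} ( (C⁻¹)_{il}(C⁻¹)_{kj} + (C⁻¹)_{ik}(C⁻¹)_{jl} + β (C⁻¹)_{ij}(C⁻¹)_{kl} ) H_{kl}. -/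

import Mathlib

open Matrix
open scoped BigOperators

noncomputable section

attribute [local instance]
  Matrix.frobeniusNormedAddCommGroup Matrix.frobeniusNormedSpace

/-- The second Piola–Kirchhoff stress of the Neo-Hookean model as a function of
the right Cauchy–Green tensor: `S(C) = μ (1 − (det C)^(−β/2) C⁻¹)`. -/
def secondPKofC (μ β : ℝ) (C : Matrix (Fin 3) (Fin 3) ℝ) :
    Matrix (Fin 3) (Fin 3) ℝ :=
  μ • ((1 : Matrix (Fin 3) (Fin 3) ℝ) - C.det ^ (-β / 2) • C⁻¹)

attribute [local instance] Matrix.frobeniusNormedRing Matrix.frobeniusNormedAlgebra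

/-- Auxiliary: sum of determinants with one row replaced equals `trace (adjugate C * H)`. -/
lemma sum_det_updateRow_aux (C H : Matrix (Fin 3) (Fin 3) ℝ) :
    ∑ i, (C.updateRow i (H i)).det = (C.adjugate * H).trace := by
  have h : ∀ i, (C.updateRow i (H i)).det = ∑ j, C.adjugate j i * H i j := by
    intro i
    rw [← Matrix.cramer_transpose_apply, Matrix.cramer_eq_adjugate_mulVec,
      Matrix.mulVec, dotProduct]
    simp [← Matrix.adjugate_transpose]
  simp only [h, Matrix.trace, Matrix.diag, Matrix.mul_apply]
  exact Finset.sum_comm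

/-- Auxiliary: the identity as a linear equivalence between matrices (Frobenius norm)
and the pi type (pi norm). -/
def matPiEquivAux : Matrix (Fin 3) (Fin 3) ℝ ≃ₗ[ℝ] (Fin 3 → Fin 3 → ℝ) where
  toFun M := M
  invFun M := M
  map_add' _ _ := rfl
  map_smul' _ _ := rfl
  left_inv _ := rfl
  right_inv _ := rfl

/-- Jacobi's formula: the determinant is differentiable with derivative
`H ↦ trace (adjugate C * H)`. -/
lemma det_hasFDerivAt_aux (C : Matrix (Fin 3) (Fin 3) ℝ) :
    ∃ D : Matrix (Fin 3) (Fin 3) ℝ →L[ℝ] ℝ,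
      HasFDerivAt Matrix.det D C ∧ ∀ H, D H = (C.adjugate * H).trace := by
  classical
  set dm : MultilinearMap ℝ (fun _ : Fin 3 => Fin 3 → ℝ) ℝ :=
    (Matrix.detRowAlternating : (Fin 3 → ℝ) [⋀^Fin 3]→ₗ[ℝ] ℝ).toMultilinearMap with hdm
  have hb : ∀ m : Fin 3 → (Fin 3 → ℝ), ‖dm m‖ ≤ 6 * ∏ i, ‖m i‖ := by
    intro m
    have h1 : dm m = Matrix.det (Matrix.of m) := rfl
    rw [h1, Matrix.det_apply]
    calc ‖∑ σ : Equiv.Perm (Fin 3), Equiv.Perm.sign σ • ∏ i, Matrix.of m (σ i) i‖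
        ≤ ∑ σ : Equiv.Perm (Fin 3), ‖Equiv.Perm.sign σ • ∏ i, Matrix.of m (σ i) i‖ :=
          norm_sum_le _ _
      _ ≤ ∑ _σ : Equiv.Perm (Fin 3), ∏ i, ‖m i‖ := by
          refine Finset.sum_le_sum fun σ _ => ?_
          have hs : ‖Equiv.Perm.sign σ • ∏ i, Matrix.of m (σ i) i‖
              = ‖∏ i, Matrix.of m (σ i) i‖ := by
            rcases Int.units_eq_one_or (Equiv.Perm.sign σ) with h | h <;>
              simp [h, Units.smul_def]
          rw [hs]
          have h2 : ‖∏ i, Matrix.of m (σ i) i‖ ≤ ∏ i, ‖m (σ i)‖ := by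
            rw [Real.norm_eq_abs, Finset.abs_prod]
            refine Finset.prod_le_prod (fun _ _ => abs_nonneg _) fun i _ => ?_
            exact norm_le_pi_norm (m (σ i)) i
          refine h2.trans_eq ?_
          exact Equiv.prod_comp σ fun i => ‖m i‖
      _ = 6 * ∏ i, ‖m i‖ := by
          rw [Finset.sum_const, Finset.card_univ]
          simp [Fintype.card_perm]
          norm_num [Nat.factorial]
  set F := dm.mkContinuous 6 hb with hF
  have hFd : HasFDerivAt (⇑F) (F.linearDeriv (matPiEquivAux C)) (matPiEquivAux C) :=
    F.hasFDerivAt _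
  set e := matPiEquivAux.toContinuousLinearEquiv with he
  have hcomp : HasFDerivAt (⇑F ∘ ⇑e)
      ((F.linearDeriv (matPiEquivAux C)).comp (e : Matrix (Fin 3) (Fin 3) ℝ →L[ℝ] _)) C :=
    hFd.comp C e.toContinuousLinearMap.hasFDerivAt
  have hfun : (⇑F ∘ ⇑e) = Matrix.det := by
    funext M
    rfl
  rw [hfun] at hcomp
  refine ⟨_, hcomp, fun H => ?_⟩
  have : ((F.linearDeriv (matPiEquivAux C)).comp
      (e : Matrix (Fin 3) (Fin 3) ℝ →L[ℝ] _)) H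
      = ∑ i, (C.updateRow i (H i)).det := by
    simp only [ContinuousLinearMap.comp_apply]
    rw [ContinuousMultilinearMap.linearDeriv_apply]
    rfl
  rw [this, sum_det_updateRow_aux]

/-- For a symmetric positive-definite `C`, the map `S(C) = μ(1 − (det C)^(−β/2) C⁻¹)`
is Fréchet differentiable at `C` and, for every symmetric direction `H`,
`DS(C)[H] = μ (det C)^(−β/2) (C⁻¹ H C⁻¹ + (β/2) trace(C⁻¹ H) C⁻¹)`;
equivalently, in components,
`2 (DS(C)[H])_{ij} = μ (det C)^(−β/2) Σ_{k,l} ((C⁻¹)_{il}(C⁻¹)_{kj}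
  + (C⁻¹)_{ik}(C⁻¹)_{jl} + β (C⁻¹)_{ij}(C⁻¹)_{kl}) H_{kl}`,
the material tangent modulus `ℂ^{SE} = 2 ∂S/∂C`. -/
theorem secondPKofC_hasFDerivAt (μ β : ℝ) (hμ : 0 < μ)
    (C : Matrix (Fin 3) (Fin 3) ℝ) (hC : C.PosDef) :
    ∃ L : Matrix (Fin 3) (Fin 3) ℝ →L[ℝ] Matrix (Fin 3) (Fin 3) ℝ,
      HasFDerivAt (secondPKofC μ β) L C ∧
      ∀ H : Matrix (Fin 3) (Fin 3) ℝ, Hᵀ = H →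
        L H = (μ * C.det ^ (-β / 2)) •
            (C⁻¹ * H * C⁻¹ + (β / 2 * (C⁻¹ * H).trace) • C⁻¹) ∧
        ∀ i j : Fin 3, 2 * L H i j = μ * C.det ^ (-β / 2) *
            ∑ k : Fin 3, ∑ l : Fin 3,
              (C⁻¹ i l * C⁻¹ k j + C⁻¹ i k * C⁻¹ j l + β * C⁻¹ i j * C⁻¹ k l)
                * H k l := by
  classical
  have hd : 0 < C.det := hC.det_pos
  have hU : IsUnit C := (Matrix.isUnit_iff_isUnit_det C).2 (IsUnit.of_mul_eq_one _
    (mul_inv_cancel₀ hd.ne'))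
  obtain ⟨u, hu⟩ := hU
  have hinv : HasFDerivAt (fun M : Matrix (Fin 3) (Fin 3) ℝ => M⁻¹)
      (-(ContinuousLinearMap.mulLeftRight ℝ _ C⁻¹ C⁻¹)) C := by
    have h1 := hasFDerivAt_ringInverse (𝕜 := ℝ) u
    have h2 : (fun M : Matrix (Fin 3) (Fin 3) ℝ => M⁻¹) = Ring.inverse := by
      funext M; exact Matrix.nonsing_inv_eq_ringInverse M
    have h3 : ((u⁻¹ : (Matrix (Fin 3) (Fin 3) ℝ)ˣ) : Matrix (Fin 3) (Fin 3) ℝ) = C⁻¹ := by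
      rw [← hu]; exact (Matrix.coe_units_inv u).symm ▸ rfl
    rw [h2, ← h3, ← hu]
    exact h1
  obtain ⟨D, hDd, hD⟩ := det_hasFDerivAt_aux C
  have hg : HasFDerivAt (fun M : Matrix (Fin 3) (Fin 3) ℝ => M.det ^ (-β / 2))
      ((-β / 2 * C.det ^ (-β / 2 - 1)) • D) C := by
    have h1 : HasDerivAt (fun t : ℝ => t ^ (-β / 2))
        (-β / 2 * C.det ^ (-β / 2 - 1)) C.det := by
      simpa [mul_comm] using Real.hasDerivAt_rpow_const (x := C.det) (p := -β / 2)
        (Or.inl hd.ne')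
    exact h1.comp_hasFDerivAt C hDd
  have hsm : HasFDerivAt
      (fun M : Matrix (Fin 3) (Fin 3) ℝ => M.det ^ (-β / 2) • M⁻¹)
      (@HAdd.hAdd _ _ _ instHAdd (C.det ^ (-β / 2) • (-(ContinuousLinearMap.mulLeftRight ℝ _ C⁻¹ C⁻¹)))
        (((-β / 2 * C.det ^ (-β / 2 - 1)) • D).smulRight C⁻¹)) C :=
    hg.smul hinv
  have hS : HasFDerivAt (secondPKofC μ β)
      (μ • (-(@HAdd.hAdd _ _ _ instHAdd (C.det ^ (-β / 2) • (-(ContinuousLinearMap.mulLeftRight ℝ _ C⁻¹ C⁻¹)))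
        (((-β / 2 * C.det ^ (-β / 2 - 1)) • D).smulRight C⁻¹)))) C :=
    (hsm.const_sub (1 : Matrix (Fin 3) (Fin 3) ℝ)).const_smul μ
  refine ⟨_, hS, fun H hH => ?_⟩
  have hadj : C.adjugate = C.det • C⁻¹ := by
    rw [Matrix.inv_def, Ring.inverse_eq_inv', smul_smul, mul_inv_cancel₀ hd.ne', one_smul]
  have hDH : D H = C.det * (C⁻¹ * H).trace := by
    rw [hD, hadj, Matrix.smul_mul, Matrix.trace_smul, smul_eq_mul]
  have hpow : C.det ^ (-β / 2 - 1) * C.det = C.det ^ (-β / 2) := by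
    rw [← Real.rpow_add_one hd.ne']
    ring_nf
  have hLH : (μ • (-(@HAdd.hAdd _ _ _ instHAdd (C.det ^ (-β / 2) • (-(ContinuousLinearMap.mulLeftRight ℝ _ C⁻¹ C⁻¹)))
        (((-β / 2 * C.det ^ (-β / 2 - 1)) • D).smulRight C⁻¹)))) H
      = (μ * C.det ^ (-β / 2)) •
        (C⁻¹ * H * C⁻¹ + (β / 2 * (C⁻¹ * H).trace) • C⁻¹) := by
    simp only [ContinuousLinearMap.smul_apply, ContinuousLinearMap.neg_apply,
      ContinuousLinearMap.add_apply, ContinuousLinearMap.smulRight_apply,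
      ContinuousLinearMap.mulLeftRight_apply, hDH]
    erw [ContinuousLinearMap.add_apply, ContinuousLinearMap.smulRight_apply]
    simp only [ContinuousLinearMap.smul_apply, ContinuousLinearMap.neg_apply,
      ContinuousLinearMap.mulLeftRight_apply, hDH]
    ext i j
    simp only [Matrix.smul_apply, Matrix.neg_apply, Matrix.add_apply, smul_eq_mul]
    linear_combination (μ * (β / 2) * (C⁻¹ * H).trace * C⁻¹ i j) * hpow
  refine ⟨hLH, fun i j => ?_⟩
  erw [hLH]
  have hCs : Cᵀ = C := hC.isHermitian.eq
  have hAs : (C⁻¹)ᵀ = C⁻¹ := by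
    rw [Matrix.transpose_nonsing_inv, hCs]
  set A := C⁻¹ with hA
  have hAe : ∀ k l, A l k = A k l := fun k l => by
    conv_lhs => rw [← hAs]
    rfl
  have hHe : ∀ k l, H l k = H k l := fun k l => by
    conv_lhs => rw [← hH]
    rfl
  have hsym : (A * H * A)ᵀ = A * H * A := by
    rw [Matrix.transpose_mul, Matrix.transpose_mul, hAs, hH, ← Matrix.mul_assoc]
  have hterm2 : ∀ i j : Fin 3,
      (A * H * A) i j = ∑ k : Fin 3, ∑ l : Fin 3, A i k * A j l * H k l := by
    intro i j
    rw [Matrix.mul_apply]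
    simp_rw [Matrix.mul_apply, Finset.sum_mul]
    rw [Finset.sum_comm]
    refine Finset.sum_congr rfl fun k _ => Finset.sum_congr rfl fun l _ => ?_
    rw [hAe j l]
    ring
  have hterm1 : (A * H * A) i j
      = ∑ k : Fin 3, ∑ l : Fin 3, A i l * A k j * H k l := by
    have h : (A * H * A) i j = (A * H * A) j i := by
      conv_lhs => rw [← hsym]
      rfl
    rw [h, hterm2 j i]
    refine Finset.sum_congr rfl fun k _ => Finset.sum_congr rfl fun l _ => ?_
    rw [hAe j k]
    ring
  have hterm3 : ∑ k : Fin 3, ∑ l : Fin 3, β * A i j * A k l * H k l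
      = β * A i j * (A * H).trace := by
    rw [Matrix.trace]
    simp_rw [Matrix.diag_apply, Matrix.mul_apply, Finset.mul_sum]
    refine Finset.sum_congr rfl fun k _ => Finset.sum_congr rfl fun l _ => ?_
    rw [hHe k l]
    ring
  have hsplit : ∑ k : Fin 3, ∑ l : Fin 3,
      (A i l * A k j + A i k * A j l + β * A i j * A k l) * H k l
      = (∑ k : Fin 3, ∑ l : Fin 3, A i l * A k j * H k l)
        + (∑ k : Fin 3, ∑ l : Fin 3, A i k * A j l * H k l)
        + ∑ k : Fin 3, ∑ l : Fin 3, β * A i j * A k l * H k l := by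
    simp_rw [add_mul, Finset.sum_add_distrib]
  have key : 2 * ((A * H * A) i j + (β / 2 * (A * H).trace) * A i j)
      = ∑ k : Fin 3, ∑ l : Fin 3,
        (A i l * A k j + A i k * A j l + β * A i j * A k l) * H k l := by
    rw [hsplit, ← hterm1, ← hterm2 i j, hterm3]
    ring
  calc 2 * ((μ * C.det ^ (-β / 2)) •
        (A * H * A + (β / 2 * (A * H).trace) • A)) i j
      = (μ * C.det ^ (-β / 2)) *
        (2 * ((A * H * A) i j + (β / 2 * (A * H).trace) * A i j)) := by
        simp only [Matrix.smul_apply, Matrix.add_apply, smul_eq_mul]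
        ring
    _ = μ * C.det ^ (-β / 2) * ∑ k : Fin 3, ∑ l : Fin 3,
        (A i l * A k j + A i k * A j l + β * A i j * A k l) * H k l := by
        rw [key]
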